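/- Let ν be a probability measure on ℝⁿ with density v ∈ L¹(ℝⁿ), let M_kν be its marginal on the first k coordinates. Let X ⊆ ℝ^m with probability measure μ and T : X → ℝ^k a bijection onto its image pushing μ forward to M_kν. Then the map Lf(y) := √(v(y)) · (T_♯f)(y_1,…,y_k) is a unitary (inner-product-preserving) map from L²(X, dμ) to L²(ℝⁿ, dy). -/

import Mathlib

open MeasureTheory

/-- Let `ν` be a probability measure on `ℝⁿ = ℝᵏ × ℝˡ` with density `v`, and
`T : X → ℝᵏ` a measurable injection (with left inverse `S`) pushing the probability
measure `μ` on the Borel set `X ⊆ ℝ^m` forward to the marginal `M_kν`. Then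
`Lf(y) = √(v(y)) · f(T⁻¹(y₁,…,y_k))` is unitary from `L²(X, μ)` to `L²(ℝⁿ, dy)`. -/
theorem marginal_pushforward_unitary (m k l : ℕ) (X : Set (Fin m → ℝ))
    (hX : MeasurableSet X) (μ : Measure X) [IsProbabilityMeasure μ]
    (v : (Fin k → ℝ) × (Fin l → ℝ) → ℝ) (hvm : Measurable v) (hv0 : ∀ y, 0 ≤ v y)
    (hv1 : ∫ y, v y = 1)
    (T : X → Fin k → ℝ) (hT : Measurable T) (S : (Fin k → ℝ) → X)
    (hS : Measurable S) (hST : ∀ x, S (T x) = x)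
    (hpush : μ.map T =
      ((volume.withDensity fun y => ENNReal.ofReal (v y)).map Prod.fst))
    (f g : X → ℂ) (hf : MemLp f 2 μ) (hg : MemLp g 2 μ) :
    ∫ y : (Fin k → ℝ) × (Fin l → ℝ),
        ((Real.sqrt (v y) : ℂ) * f (S y.1)) *
          (starRingEnd ℂ) ((Real.sqrt (v y) : ℂ) * g (S y.1)) =
      ∫ x, f x * (starRingEnd ℂ) (g x) ∂μ := by
  have hfm := hf.aestronglyMeasurable
  have hgm := hg.aestronglyMeasurable
  set F := hfm.mk f with hFdef
  have hFsm : StronglyMeasurable F := hfm.stronglyMeasurable_mk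
  have hfF : f =ᵐ[μ] F := hfm.ae_eq_mk
  set G := hgm.mk g with hGdef
  have hGsm : StronglyMeasurable G := hgm.stronglyMeasurable_mk
  have hgG : g =ᵐ[μ] G := hgm.ae_eq_mk
  set N : Set X := toMeasurable μ ({x | f x ≠ F x} ∪ {x | g x ≠ G x}) with hNdef
  have hNmeas : MeasurableSet N := measurableSet_toMeasurable _ _
  have hNnull : μ N = 0 := by
    rw [hNdef, measure_toMeasurable]
    exact measure_union_null (ae_iff.mp hfF) (ae_iff.mp hgG)
  set A : Set ((Fin k → ℝ) × (Fin l → ℝ)) := Prod.fst ⁻¹' (S ⁻¹' N) with hAdef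
  have hAmeas : MeasurableSet A := measurable_fst (hS hNmeas)
  set ρ := volume.withDensity fun y => ENNReal.ofReal (v y) with hρ
  have hρA : ρ A = 0 := by
    have h1 : (ρ.map Prod.fst) (S ⁻¹' N) = ρ A :=
      Measure.map_apply measurable_fst (hS hNmeas)
    have h2 : (μ.map T) (S ⁻¹' N) = μ N := by
      rw [Measure.map_apply hT (hS hNmeas)]
      congr 1
      ext x
      simp [hST]
    rw [← h1, ← hpush, h2, hNnull]
  have hvA : ∀ᵐ y ∂(volume : Measure ((Fin k → ℝ) × (Fin l → ℝ))),
      y ∈ A → v y = 0 := by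
    have h0 : ∫⁻ y in A, ENNReal.ofReal (v y) = 0 := by
      rw [← withDensity_apply _ hAmeas]; exact hρA
    have h1 := (setLIntegral_eq_zero_iff hAmeas hvm.ennreal_ofReal).mp h0
    filter_upwards [h1] with y hy hyA
    have h3 := ENNReal.ofReal_eq_zero.mp (hy hyA)
    linarith [hv0 y]
  have key : ∀ᵐ y ∂(volume : Measure ((Fin k → ℝ) × (Fin l → ℝ))),
      ((Real.sqrt (v y) : ℂ) * f (S y.1)) *
          (starRingEnd ℂ) ((Real.sqrt (v y) : ℂ) * g (S y.1))
        = (v y).toNNReal • (F (S y.1) * (starRingEnd ℂ) (G (S y.1))) := by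
    filter_upwards [hvA] with y hy
    by_cases hyA : y ∈ A
    · rw [hy hyA]; simp
    · have hSN : S y.1 ∉ N := hyA
      have hfe : f (S y.1) = F (S y.1) := by
        by_contra h
        exact hSN (subset_toMeasurable _ _ (Or.inl h))
      have hge : g (S y.1) = G (S y.1) := by
        by_contra h
        exact hSN (subset_toMeasurable _ _ (Or.inr h))
      have hsq : ((Real.sqrt (v y) : ℂ)) * (Real.sqrt (v y) : ℂ) = (v y : ℂ) := by
        rw [← Complex.ofReal_mul, Real.mul_self_sqrt (hv0 y)]
      rw [hfe, hge, map_mul, Complex.conj_ofReal, mul_mul_mul_comm, hsq,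
        NNReal.smul_def, Real.coe_toNNReal _ (hv0 y), Complex.real_smul]
  have hrhs : ∫ x, f x * (starRingEnd ℂ) (g x) ∂μ
      = ∫ x, F x * (starRingEnd ℂ) (G x) ∂μ := by
    refine integral_congr_ae ?_
    filter_upwards [hfF, hgG] with x h1 h2
    rw [h1, h2]
  have hHsm : StronglyMeasurable fun z : Fin k → ℝ =>
      F (S z) * (starRingEnd ℂ) (G (S z)) :=
    (hFsm.comp_measurable hS).mul
      (Complex.continuous_conj.comp_stronglyMeasurable (hGsm.comp_measurable hS))
  rw [hrhs, integral_congr_ae key]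
  calc ∫ y : (Fin k → ℝ) × (Fin l → ℝ),
        (v y).toNNReal • (F (S y.1) * (starRingEnd ℂ) (G (S y.1)))
      = ∫ z, F (S z) * (starRingEnd ℂ) (G (S z)) ∂(ρ.map Prod.fst) := by
        rw [integral_map measurable_fst.aemeasurable hHsm.aestronglyMeasurable, hρ]
        exact (integral_withDensity_eq_integral_smul
          (f := fun y : (Fin k → ℝ) × (Fin l → ℝ) => (v y).toNNReal)
          (measurable_real_toNNReal.comp hvm) _).symm
    _ = ∫ z, F (S z) * (starRingEnd ℂ) (G (S z)) ∂(μ.map T) := by rw [hpush]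
    _ = ∫ x, F (S (T x)) * (starRingEnd ℂ) (G (S (T x))) ∂μ :=
        integral_map hT.aemeasurable hHsm.aestronglyMeasurable
    _ = ∫ x, F x * (starRingEnd ℂ) (G x) ∂μ := by simp [hST]
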